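/- Let X be a nonempty compact metric space, I a nonempty finite set, and Γ : I → Set (X × X) a family of closed subsets of X × X such that for each i ∈ I both coordinate projections of Γ_i onto X are surjective. Then the topological entropy h(Γ) of the correspondence, defined via ε-separated families of n-orbits, equals the topological entropy (cover entropy with respect to the product uniformity) of the shift map σ restricted to the orbit space X_∞. -/

import Mathlib

set_option linter.unusedSectionVars false
set_option maxHeartbeats 1000000

/-- The shift map on pairs of sequences `(x : ℕ → X, j : ℕ → I)`. -/
def corrShift {X I : Type*} (p : (ℕ → X) × (ℕ → I)) : (ℕ → X) × (ℕ → I) :=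
  (fun n => p.1 (n + 1), fun n => p.2 (n + 1))

/-- The orbit space `X_∞` of the correspondence with graphs `Γ i`. -/
def orbitSpace {X I : Type*} (Γ : I → Set (X × X)) : Set ((ℕ → X) × (ℕ → I)) :=
  {p | ∀ n : ℕ, (p.1 n, p.1 (n + 1)) ∈ Γ (p.2 n)}

/-- An `n`-orbit of the correspondence: a pair of sequences `(x, j)` such that
`(x (r-1), x r) ∈ Γ (j r)` for all `1 ≤ r ≤ n` (only the values `x 0, …, x n` and
`j 1, …, j n` are relevant). -/
def IsOrbit {X I : Type*} (Γ : I → Set (X × X)) (n : ℕ) (o : (ℕ → X) × (ℕ → I)) : Prop :=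
  ∀ r : ℕ, 1 ≤ r → r ≤ n → (o.1 (r - 1), o.1 r) ∈ Γ (o.2 r)

/-- Two `n`-orbits are `ε`-separated if their index sequences differ at some `1 ≤ r ≤ n`
or their point sequences are at distance `> ε` at some `0 ≤ r ≤ n`. -/
def IsSeparatedPair {X : Type*} [MetricSpace X] {I : Type*} (ε : ℝ) (n : ℕ)
    (o o' : (ℕ → X) × (ℕ → I)) : Prop :=
  (∃ r : ℕ, 1 ≤ r ∧ r ≤ n ∧ o.2 r ≠ o'.2 r) ∨ ∃ r ≤ n, ε < dist (o.1 r) (o'.1 r)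

/-- The topological entropy of the correspondence with graphs `Γ i`, defined as
`sup_{ε > 0} limsup_{n → ∞} (1/n) log (max #(ε-separated family of n-orbits))`. -/
noncomputable def corrEntropy {X : Type*} [MetricSpace X] {I : Type*}
    (Γ : I → Set (X × X)) : EReal :=
  ⨆ (ε : ℝ) (_ : 0 < ε), Filter.limsup
    (fun n : ℕ =>
      ((Real.log ((sSup {N : ℕ | ∃ F : Finset ((ℕ → X) × (ℕ → I)), F.card = N ∧
          (∀ o ∈ F, IsOrbit Γ n o) ∧
          ∀ o ∈ F, ∀ o' ∈ F, o ≠ o' → IsSeparatedPair ε n o o'} : ℕ) : ℝ) / n : ℝ) : EReal))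
    Filter.atTop

namespace CorrEntropyAux

open Filter Set Dynamics UniformSpace Uniformity Topology
open scoped ENNReal NNReal ENat

variable {X : Type*} [MetricSpace X] {I : Type*} {Γ : I → Set (X × X)}

/-- Cardinalities of `ε`-separated families of `n`-orbits. -/
def sepSet (Γ : I → Set (X × X)) (ε : ℝ) (n : ℕ) : Set ℕ :=
  {N : ℕ | ∃ F : Finset ((ℕ → X) × (ℕ → I)), F.card = N ∧
      (∀ o ∈ F, IsOrbit Γ n o) ∧
      ∀ o ∈ F, ∀ o' ∈ F, o ≠ o' → IsSeparatedPair ε n o o'}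

noncomputable def maxSep (Γ : I → Set (X × X)) (ε : ℝ) (n : ℕ) : ℕ :=
  sSup (sepSet Γ ε n)

/-- Basic entourages of the orbit-sequence space. -/
def went (X : Type*) [MetricSpace X] (I : Type*) (m : ℕ) (ε : ℝ) :
    Set (((ℕ → X) × (ℕ → I)) × ((ℕ → X) × (ℕ → I))) :=
  {pq | (∀ k < m, pq.1.2 k = pq.2.2 k) ∧ ∀ k < m, dist (pq.1.1 k) (pq.2.1 k) ≤ ε}

lemma zero_mem_sepSet (ε : ℝ) (n : ℕ) : 0 ∈ sepSet Γ ε n :=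
  ⟨∅, by simp, by simp, by simp⟩

lemma exists_mem_orbitSpace_extending [Nonempty I]
    (hsurj1 : ∀ i, Prod.fst '' Γ i = Set.univ) {n : ℕ} {o : (ℕ → X) × (ℕ → I)}
    (ho : IsOrbit Γ n o) :
    ∃ p ∈ orbitSpace Γ, (∀ r ≤ n, p.1 r = o.1 r) ∧ (∀ r, r + 1 ≤ n → p.2 r = o.2 (r + 1)) := by
  obtain ⟨i₀⟩ := ‹Nonempty I›
  have hg : ∀ x : X, ∃ y, (x, y) ∈ Γ i₀ := by
    intro x
    have hx : x ∈ Prod.fst '' Γ i₀ := by rw [hsurj1 i₀]; trivial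
    obtain ⟨q, hq, rfl⟩ := hx
    exact ⟨q.2, hq⟩
  choose g hgmem using hg
  refine ⟨(fun r => if r ≤ n then o.1 r else g^[r - n] (o.1 n),
           fun r => if r + 1 ≤ n then o.2 (r + 1) else i₀), ?_, ?_, ?_⟩
  · intro k
    simp only
    by_cases hk : k + 1 ≤ n
    · have hk' : k ≤ n := le_trans (Nat.le_succ k) hk
      rw [if_pos hk, if_pos hk', if_pos hk]
      have := ho (k + 1) (Nat.succ_le_succ (Nat.zero_le k)) hk
      simpa using this
    · rw [if_neg hk, if_neg hk]
      by_cases hk2 : k ≤ n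
      · have hkn : k = n := by omega
        subst hkn
        rw [if_pos le_rfl]
        have h1 : k + 1 - k = 1 := by omega
        rw [h1, Function.iterate_one]
        exact hgmem (o.1 k)
      · rw [if_neg hk2]
        have h2 : k + 1 - n = (k - n) + 1 := by omega
        rw [h2, Function.iterate_succ_apply']
        exact hgmem _
  · intro r hr; simp [hr]
  · intro r hr; simp [hr]

lemma isOrbit_of_mem_orbitSpace {p : (ℕ → X) × (ℕ → I)} (hp : p ∈ orbitSpace Γ) (n : ℕ) :
    IsOrbit Γ n (p.1, fun r => p.2 (r - 1)) := by
  intro r hr _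
  have h := hp (r - 1)
  rw [show r - 1 + 1 = r from by omega] at h
  exact h

lemma exists_isOrbit [Nonempty X] [Nonempty I]
    (hsurj1 : ∀ i, Prod.fst '' Γ i = Set.univ) (n : ℕ) :
    ∃ o, IsOrbit Γ n o := by
  obtain ⟨x₀⟩ := ‹Nonempty X›
  obtain ⟨i₀⟩ := ‹Nonempty I›
  have h0 : IsOrbit Γ 0 (fun _ => x₀, fun _ => i₀) := by intro r h1 h0; omega
  obtain ⟨p, hp, -, -⟩ := exists_mem_orbitSpace_extending hsurj1 h0
  exact ⟨_, isOrbit_of_mem_orbitSpace hp n⟩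

lemma orbitSpace_nonempty [Nonempty X] [Nonempty I]
    (hsurj1 : ∀ i, Prod.fst '' Γ i = Set.univ) :
    (orbitSpace Γ).Nonempty := by
  obtain ⟨x₀⟩ := ‹Nonempty X›
  obtain ⟨i₀⟩ := ‹Nonempty I›
  have h0 : IsOrbit Γ 0 (fun _ => x₀, fun _ => i₀) := by intro r h1 h0; omega
  obtain ⟨p, hp, -, -⟩ := exists_mem_orbitSpace_extending hsurj1 h0
  exact ⟨p, hp⟩

lemma one_mem_sepSet [Nonempty X] [Nonempty I]
    (hsurj1 : ∀ i, Prod.fst '' Γ i = Set.univ) (ε : ℝ) (n : ℕ) :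
    1 ∈ sepSet Γ ε n := by
  obtain ⟨o, ho⟩ := exists_isOrbit hsurj1 n
  refine ⟨{o}, Finset.card_singleton o, ?_, ?_⟩
  · intro o' ho'
    rw [Finset.mem_singleton] at ho'
    exact ho' ▸ ho
  · intro a ha b hb hab
    rw [Finset.mem_singleton] at ha hb
    exact absurd (ha.trans hb.symm) hab

lemma sepSet_bddAbove [CompactSpace X] [Finite I] {ε : ℝ} (hε : 0 < ε) (n : ℕ) :
    BddAbove (sepSet Γ ε n) := by
  classical
  haveI : Fintype I := Fintype.ofFinite I
  obtain ⟨t, -, htfin, htcov⟩ :=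
    finite_cover_balls_of_compact (isCompact_univ (X := X)) (half_pos hε)
  haveI := htfin.fintype
  have hcov : ∀ x : X, ∃ c : t, dist x (c : X) < ε / 2 := by
    intro x
    have hx : x ∈ ⋃ c ∈ t, Metric.ball c (ε / 2) := htcov (mem_univ x)
    simp only [mem_iUnion, Metric.mem_ball] at hx
    obtain ⟨c, hc, hxc⟩ := hx
    exact ⟨⟨c, hc⟩, hxc⟩
  choose ψ hψ using hcov
  refine ⟨Fintype.card ((Fin (n + 1) → t) × (Fin n → I)), ?_⟩
  rintro N ⟨F, rfl, horb, hsep⟩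
  have := Finset.card_le_card_of_injOn (s := F)
    (f := fun o : (ℕ → X) × (ℕ → I) =>
      ((fun r : Fin (n + 1) => ψ (o.1 r), fun r : Fin n => o.2 (r + 1)) :
        (Fin (n + 1) → t) × (Fin n → I)))
    (t := Finset.univ) (fun a _ => Finset.mem_univ _) ?_
  · simpa [Finset.card_univ] using this
  · intro o ho o' ho' heq
    by_contra hne
    rcases hsep o ho o' ho' hne with ⟨r, hr1, hrn, hne2⟩ | ⟨r, hrn, hdist⟩
    · have hr' : r - 1 < n := by omega
      have h5 := congrFun (congrArg Prod.snd heq) ⟨r - 1, hr'⟩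
      have h6 : o.2 (r - 1 + 1) = o'.2 (r - 1 + 1) := h5
      rw [show r - 1 + 1 = r from by omega] at h6
      exact hne2 h6
    · have hr' : r < n + 1 := by omega
      have h1 := congrFun (congrArg Prod.fst heq) ⟨r, hr'⟩
      have h2 := hψ (o.1 r)
      have h3 := hψ (o'.1 r)
      simp only at h1
      rw [h1] at h2
      have : dist (o.1 r) (o'.1 r) < ε := by
        calc dist (o.1 r) (o'.1 r) ≤ dist (o.1 r) (ψ (o'.1 r) : X)
              + dist (ψ (o'.1 r) : X) (o'.1 r) := dist_triangle _ _ _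
        _ < ε / 2 + ε / 2 := by rw [dist_comm (ψ (o'.1 r) : X)]; exact add_lt_add h2 h3
        _ = ε := by ring
      linarith

lemma one_le_maxSep [CompactSpace X] [Nonempty X] [Nonempty I] [Finite I]
    (hsurj1 : ∀ i, Prod.fst '' Γ i = Set.univ) {ε : ℝ} (hε : 0 < ε) (n : ℕ) :
    1 ≤ maxSep Γ ε n :=
  le_csSup (sepSet_bddAbove hε n) (one_mem_sepSet hsurj1 ε n)

lemma le_maxSep_of_mem [CompactSpace X] [Finite I] {ε : ℝ} (hε : 0 < ε) {n N : ℕ}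
    (h : N ∈ sepSet Γ ε n) : N ≤ maxSep Γ ε n :=
  le_csSup (sepSet_bddAbove hε n) h

lemma maxSep_le {ε : ℝ} {n B : ℕ} (h : ∀ N ∈ sepSet Γ ε n, N ≤ B) :
    maxSep Γ ε n ≤ B :=
  csSup_le ⟨0, zero_mem_sepSet ε n⟩ h

lemma went_antitone {m m' : ℕ} (h : m ≤ m') (ε : ℝ) :
    went X I m' ε ⊆ went X I m ε := fun pq hpq =>
  ⟨fun k hk => hpq.1 k (lt_of_lt_of_le hk h), fun k hk => hpq.2 k (lt_of_lt_of_le hk h)⟩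

lemma idRel_mem_uniformity [UniformSpace I] [DiscreteTopology I] [Finite I] :
    SetRel.id ∈ 𝓤 I := by
  have h : ∀ i : I, ∃ V ∈ 𝓤 I, ball i V ⊆ {i} := by
    intro i
    have : ({i} : Set I) ∈ 𝓝 i := by
      rw [isOpen_discrete ({i} : Set I) |>.mem_nhds_iff]
      · rfl
    exact UniformSpace.mem_nhds_iff.1 this
  choose V hV hVsub using h
  have hmem : (⋂ i, V i) ∈ 𝓤 I := Filter.iInter_mem.2 hV
  refine Filter.mem_of_superset hmem ?_
  rintro ⟨a, b⟩ hab
  have : b ∈ ball a (V a) := mem_iInter.1 hab a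
  have := hVsub a this
  simp only [mem_singleton_iff] at this
  exact this.symm ▸ rfl

lemma went_mem_uniformity [UniformSpace I] [DiscreteTopology I] [Finite I]
    (m : ℕ) {ε : ℝ} (hε : 0 < ε) :
    went X I m ε ∈ 𝓤 ((ℕ → X) × (ℕ → I)) := by
  have hVX : {ab : (ℕ → X) × (ℕ → X) | ∀ k < m, dist (ab.1 k) (ab.2 k) ≤ ε} ∈ 𝓤 (ℕ → X) := by
    have heq : {ab : (ℕ → X) × (ℕ → X) | ∀ k < m, dist (ab.1 k) (ab.2 k) ≤ ε}
        = ⋂ k ∈ Finset.range m,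
          (fun ab : (ℕ → X) × (ℕ → X) => (ab.1 k, ab.2 k)) ⁻¹' {p : X × X | dist p.1 p.2 ≤ ε} := by
      ext ab; simp [Finset.mem_range]
    rw [heq, Filter.biInter_finset_mem]
    intro k _
    rw [Pi.uniformity]
    exact Filter.mem_iInf_of_mem k (Filter.preimage_mem_comap
      (Filter.mem_of_superset (Metric.dist_mem_uniformity hε) (fun p hp => le_of_lt (mem_setOf_eq ▸ hp))))
  have hVI : {ab : (ℕ → I) × (ℕ → I) | ∀ k < m, ab.1 k = ab.2 k} ∈ 𝓤 (ℕ → I) := by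
    have heq : {ab : (ℕ → I) × (ℕ → I) | ∀ k < m, ab.1 k = ab.2 k}
        = ⋂ k ∈ Finset.range m,
          (fun ab : (ℕ → I) × (ℕ → I) => (ab.1 k, ab.2 k)) ⁻¹' SetRel.id := by
      ext ab; simp [Finset.mem_range, SetRel.id]
    rw [heq, Filter.biInter_finset_mem]
    intro k _
    rw [Pi.uniformity]
    exact Filter.mem_iInf_of_mem k (Filter.preimage_mem_comap idRel_mem_uniformity)
  refine Filter.mem_of_superset (entourageProd_mem_uniformity hVX hVI) ?_
  rintro ⟨p, q⟩ h
  rw [mem_entourageProd] at h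
  exact ⟨h.2, h.1⟩

lemma exists_went_subset [UniformSpace I]
    {U : Set ((((ℕ → X) × (ℕ → I))) × ((ℕ → X) × (ℕ → I)))}
    (hU : U ∈ 𝓤 ((ℕ → X) × (ℕ → I))) :
    ∃ m : ℕ, ∃ ε : ℝ, 0 < ε ∧ 1 ≤ m ∧ went X I m ε ⊆ U := by
  obtain ⟨u, hu, v, hv, huv⟩ := entourageProd_subset hU
  rw [Pi.uniformity] at hu hv
  obtain ⟨S, hSfin, V, hV, hVuniv, -, hu_eq⟩ := Filter.mem_iInf'.1 hu
  obtain ⟨S', hS'fin, V', hV', hV'univ, -, hv_eq⟩ := Filter.mem_iInf'.1 hv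
  choose W hW hWsub using fun k => Filter.mem_comap.1 (hV k)
  choose W' hW' hW'sub using fun k => Filter.mem_comap.1 (hV' k)
  choose εf hεf hεsub using fun k => Metric.mem_uniformity_dist.1 (hW k)
  obtain ⟨m₁, hm₁⟩ := hSfin.bddAbove
  obtain ⟨m₂, hm₂⟩ := hS'fin.bddAbove
  set m := max m₁ m₂ + 1 with hm
  have hrange : (Finset.range m).Nonempty := ⟨0, by simp [hm]⟩
  set ε := (Finset.range m).inf' hrange εf with hεdef
  have hε : 0 < ε := by
    rw [hεdef, Finset.lt_inf'_iff]
    exact fun k _ => hεf k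
  refine ⟨m, ε / 2, by positivity, by omega, ?_⟩
  rintro ⟨p, q⟩ ⟨h2, h1⟩
  apply huv
  rw [mem_entourageProd]
  constructor
  · rw [hu_eq, mem_iInter]
    intro k
    by_cases hk : k ∈ S
    · apply hWsub k
      simp only [mem_preimage]
      apply hεsub k
      have hkm : k < m := by have := hm₁ hk; omega
      calc dist (p.1 k) (q.1 k) ≤ ε / 2 := h1 k hkm
        _ < ε := by linarith
        _ ≤ εf k := Finset.inf'_le εf (Finset.mem_range.2 hkm)
    · rw [hVuniv k hk]; trivial
  · rw [hv_eq, mem_iInter]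
    intro k
    by_cases hk : k ∈ S'
    · apply hW'sub k
      simp only [mem_preimage]
      have hkm : k < m := by have := hm₂ hk; omega
      rw [h2 k hkm]
      exact refl_mem_uniformity (hW' k)
    · rw [hV'univ k hk]; trivial

lemma corrShift_iterate {X I : Type*} (k : ℕ) (p : (ℕ → X) × (ℕ → I)) :
    corrShift^[k] p = (fun t => p.1 (t + k), fun t => p.2 (t + k)) := by
  induction k generalizing p with
  | zero => rfl
  | succ k ih =>
    rw [Function.iterate_succ_apply, ih (corrShift p)]
    rfl

lemma went_refl {m : ℕ} {ε : ℝ} (hε : 0 ≤ ε) (p : (ℕ → X) × (ℕ → I)) :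
    (p, p) ∈ went X I m ε :=
  ⟨fun _ _ => rfl, fun _ _ => by simpa using hε⟩

lemma dynEntourage_went_refl {m n : ℕ} {ε : ℝ} (hε : 0 ≤ ε) (p : (ℕ → X) × (ℕ → I)) :
    (p, p) ∈ dynEntourage corrShift (went X I m ε) n :=
  mem_dynEntourage.2 fun _ _ => went_refl hε _

/-- Membership in a dynamical entourage controls all coordinates up to `n`. -/
lemma coords_of_mem_dynEntourage {δ : ℝ} {n : ℕ} (hn : 1 ≤ n)
    {a z : (ℕ → X) × (ℕ → I)}
    (h : (a, z) ∈ dynEntourage corrShift (went X I 2 δ) n) :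
    ∀ t ≤ n, a.2 t = z.2 t ∧ dist (a.1 t) (z.1 t) ≤ δ := by
  intro t ht
  rw [mem_dynEntourage] at h
  rcases lt_or_eq_of_le ht with ht' | rfl
  · have := h t ht'
    rw [corrShift_iterate, corrShift_iterate] at this
    obtain ⟨h1, h2⟩ := this
    exact ⟨by simpa using h1 0 (by omega), by simpa using h2 0 (by omega)⟩
  · have := h (t - 1) (by omega)
    rw [corrShift_iterate, corrShift_iterate] at this
    obtain ⟨h1, h2⟩ := this
    have e : 1 + (t - 1) = t := by omega
    exact ⟨by simpa [e] using h1 1 (by omega), by simpa [e] using h2 1 (by omega)⟩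

/-- Direction A: a separated family yields a dynamical net. -/
lemma sepSet_le_netMaxcard [Nonempty I]
    (hsurj1 : ∀ i, Prod.fst '' Γ i = Set.univ) {ε : ℝ} (hε : 0 < ε) {n : ℕ} (hn : 1 ≤ n)
    {N : ℕ} (hN : N ∈ sepSet Γ ε n) :
    (N : ℕ∞) ≤ netMaxcard corrShift (orbitSpace Γ) (went X I 2 (ε / 2)) n := by
  classical
  obtain ⟨G, rfl, hGorb, hGsep⟩ := hN
  choose! p hporb hp1 hp2 using
    fun o (ho : IsOrbit Γ n o) => exists_mem_orbitSpace_extending hsurj1 ho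
  set D := dynEntourage corrShift (went X I 2 (ε / 2)) n with hD
  have key : ∀ o ∈ G, ∀ o' ∈ G, o ≠ o' → Disjoint (ball (p o) D) (ball (p o') D) := by
    intro o ho o' ho' hne
    rw [Set.disjoint_left]
    intro z hz hz'
    rw [ball, mem_preimage] at hz hz'
    have hzc := coords_of_mem_dynEntourage hn hz
    have hzc' := coords_of_mem_dynEntourage hn hz'
    rcases hGsep o ho o' ho' hne with ⟨r, hr1, hrn, hne2⟩ | ⟨r, hrn, hdist⟩
    · have e : r - 1 + 1 = r := by omega
      have e1 : (p o).2 (r - 1) = o.2 r := by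
        rw [hp2 o (hGorb o ho) (r - 1) (by omega), e]
      have e2 : (p o').2 (r - 1) = o'.2 r := by
        rw [hp2 o' (hGorb o' ho') (r - 1) (by omega), e]
      have := (hzc (r - 1) (by omega)).1.trans (hzc' (r - 1) (by omega)).1.symm
      rw [e1, e2] at this
      exact hne2 this
    · have e1 : (p o).1 r = o.1 r := hp1 o (hGorb o ho) r hrn
      have e2 : (p o').1 r = o'.1 r := hp1 o' (hGorb o' ho') r hrn
      have d1 := (hzc r hrn).2
      have d2 := (hzc' r hrn).2
      rw [e1] at d1
      rw [e2] at d2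
      have : dist (o.1 r) (o'.1 r) ≤ ε := by
        calc dist (o.1 r) (o'.1 r) ≤ dist (o.1 r) (z.1 r) + dist (z.1 r) (o'.1 r) :=
              dist_triangle _ _ _
          _ ≤ ε / 2 + ε / 2 := add_le_add d1 (by rw [dist_comm]; exact d2)
          _ = ε := by ring
      linarith
  have hinj : Set.InjOn p ↑G := by
    intro o ho o' ho' hpp
    by_contra hne
    have := key o ho o' ho' hne
    rw [hpp] at this
    have hmem : p o' ∈ ball (p o') D := by
      rw [ball, mem_preimage]
      exact dynEntourage_went_refl (by positivity) _
    exact (Set.disjoint_left.1 this) hmem hmem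
  have hnet : IsDynNetIn corrShift (orbitSpace Γ) (went X I 2 (ε / 2)) n ↑(G.image p) := by
    constructor
    · intro y hy
      simp only [Finset.coe_image, mem_image, Finset.mem_coe] at hy
      obtain ⟨o, ho, rfl⟩ := hy
      exact hporb o (hGorb o ho)
    · intro a ha b hb hab
      simp only [Finset.coe_image, mem_image, Finset.mem_coe] at ha hb
      obtain ⟨o, ho, rfl⟩ := ha
      obtain ⟨o', ho', rfl⟩ := hb
      have hne : o ≠ o' := fun h => hab (by rw [h])
      exact key o ho o' ho' hne
  have hcard : (G.image p).card = G.card := Finset.card_image_of_injOn hinj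
  calc (G.card : ℕ∞) = ((G.image p).card : ℕ∞) := by rw [hcard]
    _ ≤ _ := hnet.card_le_netMaxcard

/-- Direction B: a dynamical net yields a separated family. -/
lemma netMaxcard_le_maxSep [CompactSpace X] [Finite I]
    {ε : ℝ} (hε : 0 < ε) {m n : ℕ} (hm : 1 ≤ m) (hn : 1 ≤ n) :
    netMaxcard corrShift (orbitSpace Γ) (went X I m ε) n ≤ (maxSep Γ ε (n + m) : ℕ∞) := by
  classical
  rw [netMaxcard]
  refine iSup₂_le fun s hs => ?_
  have hmem : s.card ∈ sepSet Γ ε (n + m) := by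
    set Φ : (ℕ → X) × (ℕ → I) → (ℕ → X) × (ℕ → I) :=
      fun q => (q.1, fun r => q.2 (r - 1)) with hΦ
    have hinj : Set.InjOn Φ ↑s := by
      intro q hq q' hq' heq
      simp only [hΦ, Prod.mk.injEq] at heq
      obtain ⟨h1, h2⟩ := heq
      exact Prod.ext h1 (funext fun t => by simpa using congrFun h2 (t + 1))
    have hnotD : ∀ q ∈ s, ∀ q' ∈ s, q ≠ q' →
        (q, q') ∉ dynEntourage corrShift (went X I m ε) n := by
      intro q hq q' hq' hne hmemD
      have hdisj := hs.2 hq hq' hne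
      have h1 : q' ∈ ball q (dynEntourage corrShift (went X I m ε) n) := hmemD
      have h2 : q' ∈ ball q' (dynEntourage corrShift (went X I m ε) n) :=
        dynEntourage_went_refl (le_of_lt hε) q'
      exact (Set.disjoint_left.1 hdisj) h1 h2
    refine ⟨s.image Φ, Finset.card_image_of_injOn hinj, ?_, ?_⟩
    · intro o ho
      simp only [Finset.mem_image] at ho
      obtain ⟨q, hq, rfl⟩ := ho
      exact isOrbit_of_mem_orbitSpace (hs.1 hq) (n + m)
    · intro o ho o' ho' hne
      simp only [Finset.mem_image] at ho ho'
      obtain ⟨q, hq, rfl⟩ := ho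
      obtain ⟨q', hq', rfl⟩ := ho'
      have hqq : q ≠ q' := fun h => hne (by rw [h])
      have := hnotD q hq q' hq' hqq
      rw [mem_dynEntourage] at this
      push_neg at this
      obtain ⟨k, hk, hkW⟩ := this
      rw [corrShift_iterate, corrShift_iterate] at hkW
      rw [went, mem_setOf_eq, not_and_or] at hkW
      rcases hkW with hkW | hkW
      · push_neg at hkW
        obtain ⟨r, hr, hne2⟩ := hkW
        refine Or.inl ⟨r + k + 1, by omega, by omega, ?_⟩
        simpa [hΦ] using hne2
      · push_neg at hkW
        obtain ⟨r, hr, hd⟩ := hkW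
        exact Or.inr ⟨r + k, by omega, lt_of_not_ge (by simpa using hd)⟩
  exact_mod_cast Nat.cast_le.2 (le_csSup (sepSet_bddAbove hε (n + m)) hmem)

lemma log_natCast_eq {N : ℕ} (hN : 1 ≤ N) :
    ENNReal.log ((N : ℕ∞) : ℝ≥0∞) = ((Real.log N : ℝ) : EReal) := by
  rw [ENat.toENNReal_coe]
  rw [ENNReal.log_pos_real (by exact_mod_cast Nat.one_le_iff_ne_zero.1 hN) (ENNReal.natCast_ne_top N)]
  norm_num

lemma limsup_shift (a : ℕ → ℝ) (h0 : ∀ n, 0 ≤ a n) (m : ℕ) :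
    atTop.limsup (fun n : ℕ => ((a (n + m) / n : ℝ) : EReal)) ≤
      atTop.limsup (fun n : ℕ => ((a n / n : ℝ) : EReal)) := by
  set L := atTop.limsup (fun n : ℕ => ((a n / n : ℝ) : EReal)) with hL
  have hL0 : (0 : EReal) ≤ L := by
    apply Filter.le_limsup_of_frequently_le (hu_le := Filter.isBounded_le_of_top)
    rw [Filter.frequently_atTop]
    intro N
    refine ⟨max N 1, le_max_left _ _, ?_⟩
    have h : (0 : ℝ) ≤ a (max N 1) / (max N 1 : ℕ) :=
      div_nonneg (h0 _) (by positivity)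
    exact_mod_cast h
  refine le_of_forall_gt_imp_ge_of_dense fun b hb => ?_
  rcases eq_top_or_lt_top b with rfl | hbT
  · exact le_top
  obtain ⟨c, hc1, hc2⟩ := EReal.exists_between_coe_real hb
  have hc0 : (0 : ℝ) < c := by exact_mod_cast lt_of_le_of_lt hL0 hc1
  have hbbot : b ≠ ⊥ := fun h => by
    rw [h] at hb; exact absurd (lt_of_le_of_lt hL0 hb) (by simp)
  set br := b.toReal with hbr
  have hbb : b = (br : EReal) := (EReal.coe_toReal hbT.ne hbbot).symm
  have hcb : c < br := by
    rw [hbb] at hc2; exact_mod_cast hc2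
  have hev : ∀ᶠ n : ℕ in atTop, ((a n / n : ℝ) : EReal) < (c : EReal) :=
    Filter.eventually_lt_of_limsup_lt hc1
  rw [eventually_atTop] at hev
  obtain ⟨n₀, hn₀⟩ := hev
  have htend : Tendsto (fun n : ℕ => c * m / n) atTop (𝓝 0) :=
    tendsto_const_div_atTop_nhds_zero_nat _
  have hev2 : ∀ᶠ n : ℕ in atTop, c * m / n < br - c :=
    htend.eventually (gt_mem_nhds (by linarith))
  apply Filter.limsup_le_of_le Filter.isCobounded_le_of_bot
  filter_upwards [eventually_ge_atTop (n₀ + 1), hev2] with n hn hn2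
  rw [hbb]
  have hn1 : (1 : ℕ) ≤ n := by omega
  have hnpos : (0 : ℝ) < n := by exact_mod_cast hn1
  have hnm : n₀ ≤ n + m := by omega
  have h3 : a (n + m) / (n + m : ℕ) < c := by
    have := hn₀ (n + m) hnm
    exact_mod_cast this
  have hnm_pos : (0 : ℝ) < ((n + m : ℕ) : ℝ) := by positivity
  have h4 : a (n + m) < c * ((n + m : ℕ) : ℝ) := (div_lt_iff₀ hnm_pos).1 h3
  have h5 : a (n + m) / n < br := by
    have e2 : (c * ((n + m : ℕ) : ℝ)) / n = c + c * m / n := by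
      push_cast
      field_simp
    calc a (n + m) / n < (c * ((n + m : ℕ) : ℝ)) / n := by gcongr
      _ = c + c * m / n := e2
      _ < c + (br - c) := by linarith
      _ = br := by ring
  exact_mod_cast le_of_lt h5


lemma termwise_A [CompactSpace X] [Nonempty X] [Nonempty I] [Finite I]
    (hsurj1 : ∀ i, Prod.fst '' Γ i = Set.univ) {ε : ℝ} (hε : 0 < ε) {n : ℕ} (hn : 1 ≤ n) :
    ((Real.log (maxSep Γ ε n) / n : ℝ) : EReal)
      ≤ ENNReal.log (netMaxcard corrShift (orbitSpace Γ) (went X I 2 (ε / 2)) n) / (n : EReal) := by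
  set C := netMaxcard corrShift (orbitSpace Γ) (went X I 2 (ε / 2)) n with hC
  rcases eq_top_or_lt_top C with hTC | hTC
  · rw [hTC]
    rw [ENat.toENNReal_top, ENNReal.log_top,
      EReal.top_div_of_pos_ne_top (by exact_mod_cast Nat.pos_of_ne_zero (by omega))
        (EReal.natCast_ne_top n)]
    exact le_top
  set M := C.toNat with hM
  have hCM : C = (M : ℕ∞) := (ENat.coe_toNat hTC.ne).symm
  have h1C : 1 ≤ C := (one_le_netMaxcard_iff _ _ _ _).2 (orbitSpace_nonempty hsurj1)
  have h1M : 1 ≤ M := by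
    rw [hCM] at h1C; exact_mod_cast h1C
  have hsep_le : maxSep Γ ε n ≤ M := by
    apply maxSep_le
    intro N hN
    have := sepSet_le_netMaxcard hsurj1 hε hn hN
    rw [← hC, hCM] at this
    exact_mod_cast this
  rw [hCM, log_natCast_eq h1M, ← EReal.coe_coe_eq_natCast, ← EReal.coe_div,
    EReal.coe_le_coe_iff]
  have hsep_pos : (0 : ℝ) < maxSep Γ ε n := by
    have := one_le_maxSep hsurj1 hε n
    exact_mod_cast this
  have hlog : Real.log (maxSep Γ ε n) ≤ Real.log M :=
    Real.log_le_log hsep_pos (by exact_mod_cast hsep_le)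
  rw [div_eq_mul_inv, div_eq_mul_inv]
  exact mul_le_mul_of_nonneg_right hlog (by positivity)

lemma termwise_B [CompactSpace X] [Nonempty X] [Nonempty I] [Finite I]
    (hsurj1 : ∀ i, Prod.fst '' Γ i = Set.univ) {ε : ℝ} (hε : 0 < ε)
    {m n : ℕ} (hm : 1 ≤ m) (hn : 1 ≤ n) :
    ENNReal.log (netMaxcard corrShift (orbitSpace Γ) (went X I m ε) n) / (n : EReal)
      ≤ ((Real.log (maxSep Γ ε (n + m)) / n : ℝ) : EReal) := by
  set C := netMaxcard corrShift (orbitSpace Γ) (went X I m ε) n with hC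
  have hle : C ≤ (maxSep Γ ε (n + m) : ℕ∞) := netMaxcard_le_maxSep hε hm hn
  have hTC : C ≠ ⊤ := fun h => by
    rw [h] at hle
    exact absurd (top_le_iff.1 hle) (by simp)
  set M := C.toNat with hM
  have hCM : C = (M : ℕ∞) := (ENat.coe_toNat hTC).symm
  have h1C : 1 ≤ C := (one_le_netMaxcard_iff _ _ _ _).2 (orbitSpace_nonempty hsurj1)
  have h1M : 1 ≤ M := by rw [hCM] at h1C; exact_mod_cast h1C
  have hMle : M ≤ maxSep Γ ε (n + m) := by
    rw [hCM] at hle; exact_mod_cast hle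
  rw [hCM, log_natCast_eq h1M, ← EReal.coe_coe_eq_natCast, ← EReal.coe_div,
    EReal.coe_le_coe_iff]
  have hMpos : (0 : ℝ) < M := by exact_mod_cast h1M
  have hlog : Real.log M ≤ Real.log (maxSep Γ ε (n + m)) :=
    Real.log_le_log hMpos (by exact_mod_cast hMle)
  rw [div_eq_mul_inv, div_eq_mul_inv]
  exact mul_le_mul_of_nonneg_right hlog (by positivity)

end CorrEntropyAux

open CorrEntropyAux Filter Dynamics in
/-- For a correspondence on a nonempty compact metric space given by finitely many closed
graphs with surjective projections, the topological entropy defined via `ε`-separated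
families of `n`-orbits equals the topological (cover) entropy of the shift map restricted
to the orbit space `X_∞` (with the product uniformity, `I` being discrete). -/
theorem corrEntropy_eq_coverEntropy_shift
    {X : Type*} [MetricSpace X] [CompactSpace X] [Nonempty X]
    {I : Type*} [UniformSpace I] [DiscreteTopology I] [Finite I] [Nonempty I]
    (Γ : I → Set (X × X)) (hclosed : ∀ i, IsClosed (Γ i))
    (hsurj1 : ∀ i, Prod.fst '' Γ i = Set.univ)
    (hsurj2 : ∀ i, Prod.snd '' Γ i = Set.univ) :
    corrEntropy Γ = Dynamics.coverEntropy corrShift (orbitSpace Γ) := by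
  have hcorr : corrEntropy Γ = ⨆ (ε : ℝ) (_ : 0 < ε),
      atTop.limsup (fun n : ℕ => ((Real.log (maxSep Γ ε n) / n : ℝ) : EReal)) := rfl
  apply le_antisymm
  · rw [hcorr]
    refine iSup₂_le fun ε hε => ?_
    have hstep : atTop.limsup (fun n : ℕ => ((Real.log (maxSep Γ ε n) / n : ℝ) : EReal))
        ≤ netEntropyEntourage corrShift (orbitSpace Γ) (went X I 2 (ε / 2)) := by
      apply Filter.limsup_le_limsup (hu := Filter.isCobounded_le_of_bot)
        (hv := Filter.isBounded_le_of_top)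
      filter_upwards [eventually_ge_atTop 1] with n hn
      exact termwise_A hsurj1 hε hn
    exact hstep.trans (netEntropyEntourage_le_coverEntropy _ _
      (went_mem_uniformity 2 (half_pos hε)))
  · rw [coverEntropy_eq_iSup_netEntropyEntourage]
    refine iSup₂_le fun U hU => ?_
    obtain ⟨m, ε, hε, hm, hsub⟩ := exists_went_subset hU
    have step1 : netEntropyEntourage corrShift (orbitSpace Γ) U
        ≤ netEntropyEntourage corrShift (orbitSpace Γ) (went X I m ε) :=
      netEntropyEntourage_antitone _ _ hsub
    have step2 : netEntropyEntourage corrShift (orbitSpace Γ) (went X I m ε)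
        ≤ atTop.limsup (fun n : ℕ => ((Real.log (maxSep Γ ε (n + m)) / n : ℝ) : EReal)) := by
      apply Filter.limsup_le_limsup (hu := Filter.isCobounded_le_of_bot)
        (hv := Filter.isBounded_le_of_top)
      filter_upwards [eventually_ge_atTop 1] with n hn
      exact termwise_B hsurj1 hε hm hn
    have step3 : atTop.limsup (fun n : ℕ => ((Real.log (maxSep Γ ε (n + m)) / n : ℝ) : EReal))
        ≤ atTop.limsup (fun n : ℕ => ((Real.log (maxSep Γ ε n) / n : ℝ) : EReal)) := by
      apply limsup_shift (fun n => Real.log (maxSep Γ ε n)) ?_ m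
      intro n
      apply Real.log_nonneg
      exact_mod_cast one_le_maxSep hsurj1 hε n
    have step4 : atTop.limsup (fun n : ℕ => ((Real.log (maxSep Γ ε n) / n : ℝ) : EReal))
        ≤ corrEntropy Γ := by
      rw [hcorr]
      exact le_iSup₂ (f := fun (ε : ℝ) (_ : 0 < ε) =>
        atTop.limsup (fun n : ℕ => ((Real.log (maxSep Γ ε n) / n : ℝ) : EReal))) ε hε
    exact ((step1.trans step2).trans step3).trans step4
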